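/- Let f : ℝ^m → ℝ be C¹, let α, β ∈ (0,1), δ₀ > 0, and let (x_n) be the backtracking gradient descent sequence from an arbitrary initial point x₀ ∈ ℝ^m. Then either lim_{n→∞} f(x_n) = −∞, or lim_{n→∞} ‖x_{n+1} − x_n‖ = 0. -/

import Mathlib

open Gradient

/-- Armijo's condition at `x` for step size `δ`:
`f(x − δ∇f(x)) − f(x) ≤ −αδ‖∇f(x)‖²`. -/
def ArmijoCondition {E : Type*} [NormedAddCommGroup E] [InnerProductSpace ℝ E]
    [CompleteSpace E] (f : E → ℝ) (α δ : ℝ) (x : E) : Prop :=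
  f (x - δ • ∇ f x) - f x ≤ -(α * δ * ‖∇ f x‖ ^ 2)

/-- `δsel` is the backtracking learning rate function: `δsel x` is the largest number of the
form `β^j δ₀` (i.e. the one with the smallest exponent `j`) satisfying Armijo's condition
at `x`. -/
def IsBacktrackingRate {E : Type*} [NormedAddCommGroup E] [InnerProductSpace ℝ E]
    [CompleteSpace E] (f : E → ℝ) (α β δ₀ : ℝ) (δsel : E → ℝ) : Prop :=
  ∀ x : E, ∃ j : ℕ, δsel x = β ^ j * δ₀ ∧ ArmijoCondition f α (δsel x) x ∧
    ∀ i < j, ¬ ArmijoCondition f α (β ^ i * δ₀) x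

/-- Let `f : ℝ^m → ℝ` be `C¹`, `α, β ∈ (0,1)`, `δ₀ > 0`, and `(x n)` the
backtracking gradient descent sequence from an arbitrary initial point. Then either
`f(x n) → −∞`, or `‖x_{n+1} − x_n‖ → 0`. -/
theorem backtracking_GD_f_diverges_or_steps_vanish
    {m : ℕ} (f : EuclideanSpace ℝ (Fin m) → ℝ) (hf : ContDiff ℝ 1 f)
    (α β δ₀ : ℝ) (hα0 : 0 < α) (hα1 : α < 1) (hβ0 : 0 < β) (hβ1 : β < 1) (hδ₀ : 0 < δ₀)
    (δsel : EuclideanSpace ℝ (Fin m) → ℝ) (hδsel : IsBacktrackingRate f α β δ₀ δsel)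
    (x : ℕ → EuclideanSpace ℝ (Fin m))
    (hupd : ∀ n, x (n + 1) = x n - δsel (x n) • ∇ f (x n)) :
    Filter.Tendsto (fun n => f (x n)) Filter.atTop Filter.atBot ∨
      Filter.Tendsto (fun n => ‖x (n + 1) - x n‖) Filter.atTop (nhds 0) := by
  -- basic facts about the step sizes
  have hδpos : ∀ n, 0 < δsel (x n) := by
    intro n
    obtain ⟨j, hj, -, -⟩ := hδsel (x n)
    rw [hj]; positivity
  have hδle : ∀ n, δsel (x n) ≤ δ₀ := by
    intro n
    obtain ⟨j, hj, -, -⟩ := hδsel (x n)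
    rw [hj]
    calc β ^ j * δ₀ ≤ 1 * δ₀ := by
          apply mul_le_mul_of_nonneg_right _ hδ₀.le
          exact pow_le_one₀ hβ0.le hβ1.le
      _ = δ₀ := one_mul δ₀
  -- key inequality
  have key : ∀ n, α * δsel (x n) * ‖∇ f (x n)‖ ^ 2 ≤ f (x n) - f (x (n + 1)) := by
    intro n
    obtain ⟨j, -, harm, -⟩ := hδsel (x n)
    have := harm
    unfold ArmijoCondition at this
    rw [hupd n]
    linarith
  have hstep : ∀ n, ‖x (n + 1) - x n‖ = δsel (x n) * ‖∇ f (x n)‖ := by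
    intro n
    rw [hupd n]
    rw [sub_sub_cancel_left, norm_neg, norm_smul, Real.norm_eq_abs,
      abs_of_pos (hδpos n)]
  have hanti : Antitone (fun n => f (x n)) := by
    apply antitone_nat_of_succ_le
    intro n
    have h1 := key n
    have hd := hδpos n
    have h2 : 0 ≤ α * δsel (x n) * ‖∇ f (x n)‖ ^ 2 := by positivity
    linarith
  rcases tendsto_of_antitone hanti with h | ⟨l, hl⟩
  · exact Or.inl h
  · right
    have hl' : Filter.Tendsto (fun n => f (x (n + 1))) Filter.atTop (nhds l) :=
      hl.comp (Filter.tendsto_add_atTop_nat 1)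
    have hdiff : Filter.Tendsto (fun n => f (x n) - f (x (n + 1))) Filter.atTop (nhds 0) := by
      have := hl.sub hl'
      simpa using this
    have hbound : ∀ n, ‖x (n + 1) - x n‖ ^ 2 ≤ (δ₀ / α) * (f (x n) - f (x (n + 1))) := by
      intro n
      have h1 := key n
      have h2 : ‖x (n + 1) - x n‖ ^ 2 = δsel (x n) ^ 2 * ‖∇ f (x n)‖ ^ 2 := by
        rw [hstep n]; ring
      rw [h2]
      have h3 : δsel (x n) ^ 2 * ‖∇ f (x n)‖ ^ 2 ≤ δ₀ * (δsel (x n) * ‖∇ f (x n)‖ ^ 2) := by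
        have : δsel (x n) ^ 2 ≤ δ₀ * δsel (x n) := by
          have := hδle n
          nlinarith [hδpos n]
        nlinarith [sq_nonneg ‖∇ f (x n)‖]
      calc δsel (x n) ^ 2 * ‖∇ f (x n)‖ ^ 2 ≤ δ₀ * (δsel (x n) * ‖∇ f (x n)‖ ^ 2) := h3
        _ = (δ₀ / α) * (α * δsel (x n) * ‖∇ f (x n)‖ ^ 2) := by
            field_simp
        _ ≤ (δ₀ / α) * (f (x n) - f (x (n + 1))) := by
            apply mul_le_mul_of_nonneg_left h1
            positivity
    have hsq : Filter.Tendsto (fun n => ‖x (n + 1) - x n‖ ^ 2) Filter.atTop (nhds 0) := by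
      apply squeeze_zero (fun n => by positivity) hbound
      have := hdiff.const_mul (δ₀ / α)
      simpa using this
    have := hsq.sqrt
    simp only [Real.sqrt_zero] at this
    convert this using 2 with n
    rw [Real.sqrt_sq (norm_nonneg _)]
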